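/- Under Foata's fundamental transformation mapping π to σ, for q ≥ 1 the number of adjacent q-cycles (i, i+1, ..., i+q-1) in the cycle decomposition of π equals the number of occurrences of the mesh pattern r_q in σ plus the number of occurrences of the mesh pattern s_q in σ. -/

import Mathlib

open Classical in
/-- The one-line word of Foata's fundamental transformation: write each cycle of `π`
with its smallest element first, sort the cycles in descending order of their first
elements, and erase the parentheses. -/
noncomputable def foataWord {n : ℕ} (π : Equiv.Perm (Fin n)) : List (Fin n) :=
  (((List.finRange n).filter (fun m => decide (∀ k : ℕ, m ≤ (π ^ k) m))).reverse).flatMap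
    (fun m => (List.range (Function.minimalPeriod (⇑π) m)).map (fun k => (π ^ k) m))

/-- Foata's fundamental transformation as a map on permutations. -/
noncomputable def foataPerm {n : ℕ} (π : Equiv.Perm (Fin n)) : Equiv.Perm (Fin n) :=
  if h : ∃ σ : Equiv.Perm (Fin n), List.ofFn ⇑σ = foataWord π then h.choose else 1

/-- `IsAdjCycle q π i` says that (in 0-indexed terms) the cycle
`(i, i+1, …, i+q-1)` occurs in the disjoint cycle decomposition of `π`. -/
def IsAdjCycle {n : ℕ} (q : ℕ) (π : Equiv.Perm (Fin n)) (i : ℕ) : Prop :=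
  i + q ≤ n ∧
  (∀ j : Fin n, i ≤ (j : ℕ) → (j : ℕ) + 1 < i + q → ((π j : ℕ) = (j : ℕ) + 1)) ∧
  (∀ j : Fin n, (j : ℕ) = i + q - 1 → (π j : ℕ) = i)

/-- An occurrence of the mesh pattern `r_q` in `σ`: the final `q` positions of `σ`
carry the `q` smallest values in increasing order, the first of them being a
left-to-right minimum. -/
def OccR {n : ℕ} (q : ℕ) (σ : Equiv.Perm (Fin n)) (j : Fin n) : Prop :=
  (j : ℕ) + q = n ∧
  (∀ t, t < q → ∀ l : Fin n, (l : ℕ) = (j : ℕ) + t → (σ l : ℕ) = t) ∧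
  (∀ l, l < j → σ j < σ l)

/-- An occurrence of the mesh pattern `s_q` in `σ`: `q + 1` consecutive positions
`j, j+1, …, j+q` whose first `q` values are increasing and whose last value is the
smallest, such that every entry before position `j` is larger than all the chosen
values and no entry after position `j+q` has value strictly between the first and the
`q`-th chosen value (the shading conditions of `s_q`). -/
def OccS {n : ℕ} (q : ℕ) (σ : Equiv.Perm (Fin n)) (j : Fin n) : Prop :=
  (j : ℕ) + q < n ∧
  (∀ t, t + 1 < q → ∀ l l' : Fin n,
      (l : ℕ) = (j : ℕ) + t → (l' : ℕ) = (j : ℕ) + t + 1 → σ l < σ l') ∧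
  (∀ l l' : Fin n, (l : ℕ) = (j : ℕ) + q → (l' : ℕ) = (j : ℕ) → σ l < σ l') ∧
  (∀ l : Fin n, (l : ℕ) < (j : ℕ) →
      ∀ m : Fin n, (m : ℕ) = (j : ℕ) + q - 1 → σ m < σ l) ∧
  (∀ l : Fin n, (j : ℕ) + q < (l : ℕ) →
      ∀ m0 mq : Fin n, (m0 : ℕ) = (j : ℕ) → (mq : ℕ) = (j : ℕ) + q - 1 →
        ¬ (σ m0 < σ l ∧ σ l < σ mq))

namespace Foata

variable {n : ℕ}

/-- `m` is the minimum of its cycle. -/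
def Pm (π : Equiv.Perm (Fin n)) (m : Fin n) : Prop := ∀ k : ℕ, m ≤ (π ^ k) m

noncomputable def pp (π : Equiv.Perm (Fin n)) (m : Fin n) : ℕ := Function.minimalPeriod (⇑π) m

noncomputable def Bl (π : Equiv.Perm (Fin n)) (m : Fin n) : List (Fin n) :=
  (List.range (pp π m)).map (fun k => (π ^ k) m)

variable (π : Equiv.Perm (Fin n))

lemma periodic (m : Fin n) : m ∈ Function.periodicPts (⇑π) :=
  Function.mem_periodicPts.2 ⟨orderOf π, orderOf_pos π, by
    show (⇑π)^[orderOf π] m = m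
    rw [← Equiv.Perm.coe_pow, pow_orderOf_eq_one]; rfl⟩

lemma pp_pos (m : Fin n) : 0 < pp π m :=
  Function.minimalPeriod_pos_of_mem_periodicPts (periodic π m)

lemma pow_pp (m : Fin n) : (π ^ pp π m) m = m := by
  have := Function.iterate_minimalPeriod (f := ⇑π) (x := m)
  rwa [← Equiv.Perm.coe_pow] at this

lemma pow_mod_pp (m : Fin n) (k : ℕ) : (π ^ (k % pp π m)) m = (π ^ k) m := by
  have := Function.iterate_mod_minimalPeriod_eq (f := ⇑π) (x := m) (n := k)
  rwa [← Equiv.Perm.coe_pow, ← Equiv.Perm.coe_pow] at this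

lemma pow_ne {t : ℕ} (m : Fin n) (h0 : 0 < t) (ht : t < pp π m) : (π ^ t) m ≠ m := by
  intro h
  have : pp π m ≤ t := Function.IsPeriodicPt.minimalPeriod_le h0
    (by show (⇑π)^[t] m = m; rw [← Equiv.Perm.coe_pow]; exact h)
  omega

lemma min_lt_pow {t : ℕ} {m : Fin n} (hP : Pm π m) (h0 : 0 < t) (ht : t < pp π m) :
    m < (π ^ t) m := lt_of_le_of_ne (hP t) (Ne.symm (pow_ne π m h0 ht))

lemma pow_inj {t s : ℕ} (m : Fin n) (ht : t < pp π m) (hs : s < pp π m)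
    (h : (π ^ t) m = (π ^ s) m) : t = s := by
  rcases Nat.lt_trichotomy t s with hlt | he | hlt
  · exfalso
    have h2 : (π ^ t) ((π ^ (s - t)) m) = (π ^ t) m := by
      rw [← Equiv.Perm.mul_apply, ← pow_add]
      rw [show t + (s - t) = s by omega]; exact h.symm
    exact pow_ne π m (by omega) (by omega) ((π ^ t).injective h2)
  · exact he
  · exfalso
    have h2 : (π ^ s) ((π ^ (t - s)) m) = (π ^ s) m := by
      rw [← Equiv.Perm.mul_apply, ← pow_add]
      rw [show s + (t - s) = t by omega]; exact h
    exact pow_ne π m (by omega) (by omega) ((π ^ s).injective h2)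

lemma min_unique {t t' : ℕ} {m m' x : Fin n} (hP : Pm π m) (hP' : Pm π m')
    (ht : t < pp π m) (ht' : t' < pp π m')
    (h : (π ^ t) m = x) (h' : (π ^ t') m' = x) : m = m' := by
  have key : ∀ (a b : ℕ) (u v : Fin n), Pm π u → Pm π v → b < pp π v →
      (π ^ a) u = (π ^ b) v → u ≤ v := by
    intro a b u v hu hv hb hab
    have e1 : (π ^ (pp π v - b)) ((π ^ b) v) = v := by
      rw [← Equiv.Perm.mul_apply, ← pow_add, show pp π v - b + b = pp π v by omega, pow_pp]
    have e2 : (π ^ (pp π v - b + a)) u = v := by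
      rw [pow_add, Equiv.Perm.mul_apply, hab, e1]
    calc u ≤ (π ^ (pp π v - b + a)) u := hu _
      _ = v := e2
  have h1 : (π ^ t) m = (π ^ t') m' := by rw [h, h']
  exact le_antisymm (key t t' m m' hP hP' ht' h1) (key t' t m' m hP' hP ht h1.symm)

lemma length_Bl (m : Fin n) : (Bl π m).length = pp π m := by simp [Bl]

lemma getElem_Bl (m : Fin n) (t : ℕ) (ht : t < pp π m) :
    (Bl π m)[t]'(by simp [length_Bl, ht]) = (π ^ t) m := by
  simp [Bl]

lemma mem_Bl {x m : Fin n} : x ∈ Bl π m ↔ ∃ t, t < pp π m ∧ (π ^ t) m = x := by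
  simp [Bl, List.mem_map, List.mem_range]

lemma nodup_Bl (m : Fin n) : (Bl π m).Nodup := by
  rw [Bl]
  refine List.Nodup.map_on ?_ List.nodup_range
  intro t ht s hs h
  exact pow_inj π m (List.mem_range.1 ht) (List.mem_range.1 hs) h

lemma S3gen : ∀ (L : List (Fin n)), L.Pairwise (· > ·) → (∀ m ∈ L, Pm π m) →
    ∀ (j j' : ℕ) (hj' : j' < (L.flatMap (Bl π)).length) (hlt : j < j'),
    Pm π ((L.flatMap (Bl π))[j']'hj') →
    (L.flatMap (Bl π))[j']'hj' < (L.flatMap (Bl π))[j]'(Nat.lt_trans hlt hj') := by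
  intro L
  induction L with
  | nil => intro _ _ j j' hj'; simp at hj'
  | cons m0 L' ih =>
    intro hL hP j j' hj' hlt hmin
    simp only [List.flatMap_cons] at *
    have hb : (Bl π m0).length = pp π m0 := length_Bl π m0
    have hm0 : Pm π m0 := hP m0 (by simp)
    have hlen : ((m0 :: L').flatMap (Bl π)).length
        = (Bl π m0).length + (L'.flatMap (Bl π)).length := by
      simp [List.flatMap_cons]
    have hlen2 : (Bl π m0 ++ L'.flatMap (Bl π)).length
        = (Bl π m0).length + (L'.flatMap (Bl π)).length := List.length_append
    by_cases hc : j' < (Bl π m0).length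
    · exfalso
      have e : (Bl π m0 ++ L'.flatMap (Bl π))[j']'hj' = (π ^ j') m0 := by
        rw [List.getElem_append_left hc]
        exact getElem_Bl π m0 j' (hb ▸ hc)
      rw [e] at hmin
      have : (π ^ j') m0 = m0 :=
        min_unique π hmin hm0 (pp_pos π _) (hb ▸ hc) (by rw [pow_zero]; rfl) rfl
      have : j' = 0 := pow_inj π m0 (hb ▸ hc) (pp_pos π m0) (by rw [this, pow_zero]; rfl)
      omega
    · by_cases hcj : j < (Bl π m0).length
      · have ej : (Bl π m0 ++ L'.flatMap (Bl π))[j]'(Nat.lt_trans hlt hj') = (π ^ j) m0 := by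
          rw [List.getElem_append_left hcj]
          exact getElem_Bl π m0 j (hb ▸ hcj)
        have hj'2 : j' - (Bl π m0).length < (L'.flatMap (Bl π)).length := by omega
        have ej' : (Bl π m0 ++ L'.flatMap (Bl π))[j']'hj' =
            (L'.flatMap (Bl π))[j' - (Bl π m0).length]'hj'2 := by
          rw [List.getElem_append_right (by omega)]
        have hmem : (L'.flatMap (Bl π))[j' - (Bl π m0).length]'hj'2 ∈ L'.flatMap (Bl π) :=
          List.getElem_mem _
        rw [List.mem_flatMap] at hmem
        obtain ⟨m', hm'L, hx⟩ := hmem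
        rw [mem_Bl] at hx
        obtain ⟨t', ht', hxt⟩ := hx
        rw [ej'] at hmin ⊢
        rw [ej]
        have hPm' : Pm π m' := hP m' (by simp [hm'L])
        have hxm : (L'.flatMap (Bl π))[j' - (Bl π m0).length]'hj'2 = m' :=
          min_unique π hmin hPm' (pp_pos π _) ht' (by rw [pow_zero]; rfl) hxt
        rw [hxm]
        have hlt0 : m' < m0 := (List.pairwise_cons.1 hL).1 m' hm'L
        exact lt_of_lt_of_le hlt0 (hm0 j)
      · have hj'2 : j' - (Bl π m0).length < (L'.flatMap (Bl π)).length := by omega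
        have ej' : (Bl π m0 ++ L'.flatMap (Bl π))[j']'hj' =
            (L'.flatMap (Bl π))[j' - (Bl π m0).length]'hj'2 := by
          rw [List.getElem_append_right (by omega)]
        have hj2 : j - (Bl π m0).length < (L'.flatMap (Bl π)).length := by omega
        have ej : (Bl π m0 ++ L'.flatMap (Bl π))[j]'(Nat.lt_trans hlt hj') =
            (L'.flatMap (Bl π))[j - (Bl π m0).length]'hj2 := by
          rw [List.getElem_append_right (by omega)]
        rw [ej', ej]
        rw [ej'] at hmin
        have := ih (List.pairwise_cons.1 hL).2 (fun m hm => hP m (by simp [hm]))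
          (j - (Bl π m0).length) (j' - (Bl π m0).length) hj'2 (by omega) hmin
        convert this using 2

lemma S4gen : ∀ (L : List (Fin n)), L.Pairwise (· > ·) → (∀ m ∈ L, Pm π m) →
    ∀ (j : ℕ) (hj : j < (L.flatMap (Bl π)).length),
    ¬ Pm π ((L.flatMap (Bl π))[j]'hj) →
    ∃ l, l < j ∧ ∃ hl : l < (L.flatMap (Bl π)).length,
      (L.flatMap (Bl π))[l]'hl < (L.flatMap (Bl π))[j]'hj := by
  intro L
  induction L with
  | nil => intro _ _ j hj; simp at hj
  | cons m0 L' ih =>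
    intro hL hP j hj hnm
    simp only [List.flatMap_cons] at *
    have hb : (Bl π m0).length = pp π m0 := length_Bl π m0
    have hm0 : Pm π m0 := hP m0 (by simp)
    have hlen : ((m0 :: L').flatMap (Bl π)).length
        = (Bl π m0).length + (L'.flatMap (Bl π)).length := by
      simp [List.flatMap_cons]
    have hlen2 : (Bl π m0 ++ L'.flatMap (Bl π)).length
        = (Bl π m0).length + (L'.flatMap (Bl π)).length := List.length_append
    by_cases hc : j < (Bl π m0).length
    · have e : (Bl π m0 ++ L'.flatMap (Bl π))[j]'hj = (π ^ j) m0 := by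
        rw [List.getElem_append_left hc]
        exact getElem_Bl π m0 j (hb ▸ hc)
      rw [e] at hnm ⊢
      have hj0 : 0 < j := by
        rcases Nat.eq_zero_or_pos j with h0 | h0
        · exfalso; apply hnm; subst h0; simpa [pow_zero] using hm0
        · exact h0
      refine ⟨0, hj0, by omega, ?_⟩
      have e0 : (Bl π m0 ++ L'.flatMap (Bl π))[0]'(by omega) = m0 := by
        rw [List.getElem_append_left (by omega)]
        have := getElem_Bl π m0 0 (pp_pos π m0)
        simpa [pow_zero] using this
      rw [e0]
      exact min_lt_pow π hm0 hj0 (hb ▸ hc)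
    · have hj2 : j - (Bl π m0).length < (L'.flatMap (Bl π)).length := by omega
      have ej : (Bl π m0 ++ L'.flatMap (Bl π))[j]'hj =
          (L'.flatMap (Bl π))[j - (Bl π m0).length]'hj2 := by
        rw [List.getElem_append_right (by omega)]
      rw [ej] at hnm ⊢
      obtain ⟨l, hlj, hl, hlt⟩ := ih (List.pairwise_cons.1 hL).2
        (fun m hm => hP m (by simp [hm])) (j - (Bl π m0).length) hj2 hnm
      refine ⟨(Bl π m0).length + l, by omega, by omega, ?_⟩
      have el : (Bl π m0 ++ L'.flatMap (Bl π))[(Bl π m0).length + l]'(by omega) =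
          (L'.flatMap (Bl π))[l]'hl := by
        rw [List.getElem_append_right (by omega)]
        congr 1
        omega
      rw [el]
      exact hlt

lemma S5gen : ∀ (L : List (Fin n)), L.Pairwise (· > ·) → (∀ m ∈ L, Pm π m) →
    ∀ (j : ℕ) (hj : j < (L.flatMap (Bl π)).length),
    Pm π ((L.flatMap (Bl π))[j]'hj) →
    (∀ t, t < pp π ((L.flatMap (Bl π))[j]'hj) →
      ∃ h2 : j + t < (L.flatMap (Bl π)).length,
        (L.flatMap (Bl π))[j + t]'h2 = (π ^ t) ((L.flatMap (Bl π))[j]'hj)) ∧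
    (j + pp π ((L.flatMap (Bl π))[j]'hj) = (L.flatMap (Bl π)).length ∨
      ∃ h2 : j + pp π ((L.flatMap (Bl π))[j]'hj) < (L.flatMap (Bl π)).length,
        Pm π ((L.flatMap (Bl π))[j + pp π ((L.flatMap (Bl π))[j]'hj)]'h2)) := by
  intro L
  induction L with
  | nil => intro _ _ j hj; simp at hj
  | cons m0 L' ih =>
    intro hL hP j hj hmin
    simp only [List.flatMap_cons] at *
    have hb : (Bl π m0).length = pp π m0 := length_Bl π m0
    have hm0 : Pm π m0 := hP m0 (by simp)
    have hlen : ((m0 :: L').flatMap (Bl π)).length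
        = (Bl π m0).length + (L'.flatMap (Bl π)).length := by
      simp [List.flatMap_cons]
    have hlen2 : (Bl π m0 ++ L'.flatMap (Bl π)).length
        = (Bl π m0).length + (L'.flatMap (Bl π)).length := List.length_append
    by_cases hc : j < (Bl π m0).length
    · have e : (Bl π m0 ++ L'.flatMap (Bl π))[j]'hj = (π ^ j) m0 := by
        rw [List.getElem_append_left hc]
        exact getElem_Bl π m0 j (hb ▸ hc)
      have hjm : (π ^ j) m0 = m0 := by
        rw [e] at hmin
        exact min_unique π hmin hm0 (pp_pos π _) (hb ▸ hc) (by rw [pow_zero]; rfl) rfl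
      have hj0 : j = 0 := pow_inj π m0 (hb ▸ hc) (pp_pos π m0) (by rw [hjm, pow_zero]; rfl)
      subst hj0
      have e0 : (Bl π m0 ++ L'.flatMap (Bl π))[0]'hj = m0 := by rw [e, hjm]
      have hpp : pp π ((Bl π m0 ++ L'.flatMap (Bl π))[0]'hj) = pp π m0 := by rw [e0]
      constructor
      · intro t ht
        rw [hpp] at ht
        refine ⟨by omega, ?_⟩
        calc (Bl π m0 ++ L'.flatMap (Bl π))[0 + t]'(by omega)
            = (Bl π m0)[0 + t]'(by omega) := List.getElem_append_left (by omega)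
          _ = (π ^ (0 + t)) m0 := getElem_Bl π m0 (0 + t) (by omega)
          _ = (π ^ t) m0 := by rw [Nat.zero_add]
          _ = (π ^ t) ((Bl π m0 ++ L'.flatMap (Bl π))[0]'hj) := congrArg _ e0.symm
      · cases L' with
        | nil =>
          left
          have hl3 : (Bl π m0 ++ List.flatMap (Bl π) []).length = pp π m0 := by
            simp [length_Bl]
          omega
        | cons m1 L'' =>
          right
          have hlen1 : 0 < ((m1 :: L'').flatMap (Bl π)).length := by
            simp only [List.flatMap_cons, List.length_append, length_Bl]
            have := pp_pos π m1
            omega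
          refine ⟨by omega, ?_⟩
          have e1 : (Bl π m0 ++ (m1 :: L'').flatMap (Bl π))[0 + pp π ((Bl π m0 ++ (m1 :: L'').flatMap (Bl π))[0]'hj)]'(by omega) =
              ((m1 :: L'').flatMap (Bl π))[0]'hlen1 := by
            rw [List.getElem_append_right (by omega)]
            congr 1
            omega
          rw [e1]
          have e2 : ((m1 :: L'').flatMap (Bl π))[0]'hlen1 = m1 := by
            simp only [List.flatMap_cons]
            rw [List.getElem_append_left (by rw [length_Bl]; exact pp_pos π m1)]
            have := getElem_Bl π m1 0 (pp_pos π m1)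
            simpa [pow_zero] using this
          rw [e2]
          exact hP m1 (by simp)
    · have hj2 : j - (Bl π m0).length < (L'.flatMap (Bl π)).length := by omega
      have ej : (Bl π m0 ++ L'.flatMap (Bl π))[j]'hj =
          (L'.flatMap (Bl π))[j - (Bl π m0).length]'hj2 := by
        rw [List.getElem_append_right (by omega)]
      rw [ej] at hmin
      have hpp : pp π ((Bl π m0 ++ L'.flatMap (Bl π))[j]'hj) =
          pp π ((L'.flatMap (Bl π))[j - (Bl π m0).length]'hj2) := by rw [ej]
      obtain ⟨ih1, ih2⟩ := ih (List.pairwise_cons.1 hL).2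
        (fun m hm => hP m (by simp [hm])) (j - (Bl π m0).length) hj2 hmin
      constructor
      · intro t ht
        rw [hpp] at ht
        obtain ⟨h2, he⟩ := ih1 t ht
        refine ⟨by omega, ?_⟩
        calc (Bl π m0 ++ L'.flatMap (Bl π))[j + t]'(by omega)
            = (L'.flatMap (Bl π))[j - (Bl π m0).length + t]'h2 := by
              rw [List.getElem_append_right (by omega)]
              congr 1
              omega
          _ = (π ^ t) ((L'.flatMap (Bl π))[j - (Bl π m0).length]'hj2) := he
          _ = (π ^ t) ((Bl π m0 ++ L'.flatMap (Bl π))[j]'hj) := congrArg _ ej.symm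
      · rcases ih2 with hcase | ⟨h2, hmin2⟩
        · left; omega
        · right
          refine ⟨by omega, ?_⟩
          have e4 : (Bl π m0 ++ L'.flatMap (Bl π))[j + pp π ((Bl π m0 ++ L'.flatMap (Bl π))[j]'hj)]'(by omega) =
              (L'.flatMap (Bl π))[j - (Bl π m0).length + pp π ((L'.flatMap (Bl π))[j - (Bl π m0).length]'hj2)]'h2 := by
            rw [List.getElem_append_right (by omega)]
            congr 1
            omega
          rw [e4]
          exact hmin2

lemma nodupW : ∀ (L : List (Fin n)), L.Pairwise (· ≠ ·) → (∀ m ∈ L, Pm π m) →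
    (L.flatMap (Bl π)).Nodup := by
  intro L
  induction L with
  | nil => intro _ _; simp
  | cons m0 L' ih =>
    intro hL hP
    simp only [List.flatMap_cons]
    rw [List.nodup_append]
    refine ⟨nodup_Bl π m0, ih (List.pairwise_cons.1 hL).2 (fun m hm => hP m (by simp [hm])), ?_⟩
    intro x hx y hx' hxy
    subst hxy
    rw [mem_Bl] at hx
    obtain ⟨t, ht, hxt⟩ := hx
    rw [List.mem_flatMap] at hx'
    obtain ⟨m', hm'L, hx'⟩ := hx'
    rw [mem_Bl] at hx'
    obtain ⟨t', ht', hxt'⟩ := hx'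
    have : m0 = m' := min_unique π (hP m0 (by simp)) (hP m' (by simp [hm'L])) ht ht' hxt hxt'
    exact (List.pairwise_cons.1 hL).1 m' hm'L this

open Classical in
noncomputable def msList (π : Equiv.Perm (Fin n)) : List (Fin n) :=
  (List.finRange n).filter (fun m => decide (∀ k : ℕ, m ≤ (π ^ k) m))

lemma foataWord_eq : foataWord π = (msList π).reverse.flatMap (Bl π) := rfl

lemma mem_msList {m : Fin n} : m ∈ msList π ↔ Pm π m := by
  simp [msList, List.mem_filter, List.mem_finRange, Pm]

lemma msList_pairwise : (msList π).reverse.Pairwise (· > ·) := by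
  rw [List.pairwise_reverse]
  exact List.Pairwise.filter _ (List.pairwise_lt_finRange n)

lemma msList_mins : ∀ m ∈ (msList π).reverse, Pm π m := by
  intro m hm
  exact (mem_msList π).1 (List.mem_reverse.1 hm)

lemma exists_min (x : Fin n) : ∃ m, Pm π m ∧ ∃ t, t < pp π m ∧ (π ^ t) m = x := by
  classical
  set N := orderOf π with hN
  have hN0 : 0 < N := orderOf_pos π
  have hNx : ∀ y : Fin n, (π ^ N) y = y := by
    intro y
    rw [hN, pow_orderOf_eq_one]; rfl
  set c : Finset (Fin n) := (Finset.range N).image (fun k => (π ^ k) x) with hc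
  have hxc : x ∈ c := by
    rw [hc]
    exact Finset.mem_image.2 ⟨0, Finset.mem_range.2 hN0, by rw [pow_zero]; rfl⟩
  set m := c.min' ⟨x, hxc⟩ with hm
  have hmc : m ∈ c := c.min'_mem _
  obtain ⟨a, ha, hax⟩ := Finset.mem_image.1 hmc
  rw [Finset.mem_range] at ha
  have hPm : Pm π m := by
    intro k
    have hmem : (π ^ k) m ∈ c := by
      rw [hc]
      refine Finset.mem_image.2 ⟨(k + a) % N, Finset.mem_range.2 (Nat.mod_lt _ hN0), ?_⟩
      have : (π ^ ((k + a) % N)) x = (π ^ (k + a)) x := by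
        rw [hN]
        rw [pow_mod_orderOf]
      rw [this, pow_add, Equiv.Perm.mul_apply, hax]
    exact c.min'_le _ hmem
  refine ⟨m, hPm, (N - a) % pp π m, Nat.mod_lt _ (pp_pos π m), ?_⟩
  rw [pow_mod_pp]
  have : (π ^ (N - a)) ((π ^ a) x) = (π ^ N) x := by
    rw [← Equiv.Perm.mul_apply, ← pow_add, Nat.sub_add_cancel ha.le]
  rw [← hax, this, hNx]

lemma mem_foataWord (x : Fin n) : x ∈ foataWord π := by
  obtain ⟨m, hPm, t, ht, hxt⟩ := exists_min π x
  rw [foataWord_eq, List.mem_flatMap]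
  exact ⟨m, List.mem_reverse.2 ((mem_msList π).2 hPm), (mem_Bl π).2 ⟨t, ht, hxt⟩⟩

lemma nodup_foataWord : (foataWord π).Nodup := by
  rw [foataWord_eq]
  exact nodupW π _ ((msList_pairwise π).imp (fun h => ne_of_gt h)) (msList_mins π)

lemma length_foataWord : (foataWord π).length = n := by
  have h1 : (foataWord π).toFinset.card = (foataWord π).length :=
    List.toFinset_card_of_nodup (nodup_foataWord π)
  have h2 : (foataWord π).toFinset = Finset.univ :=
    Finset.eq_univ_iff_forall.2 (fun x => List.mem_toFinset.2 (mem_foataWord π x))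
  rw [← h1, h2, Finset.card_univ, Fintype.card_fin]

lemma exists_perm : ∃ σ : Equiv.Perm (Fin n), List.ofFn ⇑σ = foataWord π := by
  have hlen := length_foataWord π
  let g : Fin n → Fin n := fun j => (foataWord π)[(j : ℕ)]'(by rw [hlen]; exact j.2)
  have hinj : Function.Injective g := by
    intro a b hab
    have hginj := List.nodup_iff_injective_get.1 (nodup_foataWord π)
    have hg : (foataWord π).get ⟨(a : ℕ), by rw [hlen]; exact a.2⟩ =
        (foataWord π).get ⟨(b : ℕ), by rw [hlen]; exact b.2⟩ := by
      simpa [List.get_eq_getElem] using hab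
    have heq := hginj hg
    have : (a : ℕ) = (b : ℕ) := Fin.mk.inj heq
    exact Fin.ext this
  have hbij : Function.Bijective g := Finite.injective_iff_bijective.1 hinj
  refine ⟨Equiv.ofBijective g hbij, ?_⟩
  apply List.ext_getElem
  · simp [hlen]
  · intro i h1 h2
    simp only [List.getElem_ofFn]
    rfl

lemma ofFn_foataPerm : List.ofFn ⇑(foataPerm π) = foataWord π := by
  rw [foataPerm, dif_pos (exists_perm π)]
  exact (exists_perm π).choose_spec

lemma getElem_of_list_eq {α : Type*} {l l' : List α} (h : l = l') {i : ℕ}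
    (hi : i < l.length) (hi' : i < l'.length) : l[i]'hi = l'[i]'hi' := by
  subst h; rfl

section Sigma

variable {π σ : Equiv.Perm (Fin n)}

lemma wlen (hw : List.ofFn ⇑σ = foataWord π) :
    ((msList π).reverse.flatMap (Bl π)).length = n := by
  rw [← foataWord_eq]
  exact length_foataWord π

lemma sigma_getElem (hw : List.ofFn ⇑σ = foataWord π) {j : ℕ} (hj : j < n)
    (hj2 : j < ((msList π).reverse.flatMap (Bl π)).length) :
    ((msList π).reverse.flatMap (Bl π))[j]'hj2 = σ ⟨j, hj⟩ := by
  have he : (msList π).reverse.flatMap (Bl π) = List.ofFn ⇑σ := by rw [hw, foataWord_eq]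
  rw [getElem_of_list_eq he hj2 (by simpa using hj)]
  simp [List.getElem_ofFn]

lemma sig3 (hw : List.ofFn ⇑σ = foataWord π) {j j' : ℕ} (hj : j < n) (hj' : j' < n)
    (hlt : j < j') (hmin : Pm π (σ ⟨j', hj'⟩)) : σ ⟨j', hj'⟩ < σ ⟨j, hj⟩ := by
  have h2' : j' < ((msList π).reverse.flatMap (Bl π)).length := by rw [wlen hw]; exact hj'
  have h := S3gen π (msList π).reverse (msList_pairwise π) (msList_mins π) j j' h2' hlt
    (by rw [sigma_getElem hw hj' h2']; exact hmin)
  rwa [sigma_getElem hw hj' h2', sigma_getElem hw hj (Nat.lt_trans hlt h2')] at h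

lemma sig4 (hw : List.ofFn ⇑σ = foataWord π) {j : ℕ} (hj : j < n)
    (hnm : ¬ Pm π (σ ⟨j, hj⟩)) :
    ∃ l, l < j ∧ ∃ hl : l < n, σ ⟨l, hl⟩ < σ ⟨j, hj⟩ := by
  have hj2 : j < ((msList π).reverse.flatMap (Bl π)).length := by rw [wlen hw]; exact hj
  obtain ⟨l, hlj, hl, hlt⟩ := S4gen π (msList π).reverse (msList_pairwise π) (msList_mins π)
    j hj2 (by rw [sigma_getElem hw hj hj2]; exact hnm)
  refine ⟨l, hlj, by rw [wlen hw] at hl; exact hl, ?_⟩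
  rwa [sigma_getElem hw (by rw [wlen hw] at hl; exact hl) hl, sigma_getElem hw hj hj2] at hlt

lemma sig5 (hw : List.ofFn ⇑σ = foataWord π) {j : ℕ} (hj : j < n)
    (hmin : Pm π (σ ⟨j, hj⟩)) :
    (∀ t, t < pp π (σ ⟨j, hj⟩) →
      ∃ h2 : j + t < n, σ ⟨j + t, h2⟩ = (π ^ t) (σ ⟨j, hj⟩)) ∧
    (j + pp π (σ ⟨j, hj⟩) = n ∨
      ∃ h2 : j + pp π (σ ⟨j, hj⟩) < n, Pm π (σ ⟨j + pp π (σ ⟨j, hj⟩), h2⟩)) := by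
  have hj2 : j < ((msList π).reverse.flatMap (Bl π)).length := by rw [wlen hw]; exact hj
  have e := sigma_getElem hw hj hj2
  have epp : pp π (((msList π).reverse.flatMap (Bl π))[j]'hj2) = pp π (σ ⟨j, hj⟩) :=
    congrArg _ e
  have hwl := wlen (π := π) hw
  obtain ⟨A, B⟩ := S5gen π (msList π).reverse (msList_pairwise π) (msList_mins π) j hj2
    (by rw [e]; exact hmin)
  constructor
  · intro t ht
    obtain ⟨h2, he2⟩ := A t (by omega)
    refine ⟨by omega, ?_⟩
    calc σ ⟨j + t, by omega⟩
        = ((msList π).reverse.flatMap (Bl π))[j + t]'h2 := (sigma_getElem hw (by omega) h2).symm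
      _ = (π ^ t) (((msList π).reverse.flatMap (Bl π))[j]'hj2) := he2
      _ = (π ^ t) (σ ⟨j, hj⟩) := congrArg _ e
  · rcases B with hB | ⟨h2, hm2⟩
    · left; omega
    · right
      refine ⟨by omega, ?_⟩
      rw [sigma_getElem hw (by omega) h2] at hm2
      have hfin : (⟨j + pp π (σ ⟨j, hj⟩), by omega⟩ : Fin n) =
          ⟨j + pp π (((msList π).reverse.flatMap (Bl π))[j]'hj2), by omega⟩ :=
        Fin.ext (by simp only []; omega)
      rw [hfin]
      exact hm2

lemma Pm_zero (hn : 0 < n) : Pm π ⟨0, hn⟩ := by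
  intro k
  simp [Fin.le_def]

end Sigma

lemma adjCycle_facts {q i : ℕ} (hq : 1 ≤ q) (hc : IsAdjCycle q π i) (hin : i < n) :
    Pm π ⟨i, hin⟩ ∧ pp π ⟨i, hin⟩ = q ∧
    (∀ t, t < q → ∀ h2 : i + t < n, (π ^ t) ⟨i, hin⟩ = ⟨i + t, h2⟩) := by
  obtain ⟨hiq, hmid, hlast⟩ := hc
  have hpow : ∀ t, t < q → ∀ h2 : i + t < n, (π ^ t) ⟨i, hin⟩ = ⟨i + t, h2⟩ := by
    intro t
    induction t with
    | zero => intro _ h2; simp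
    | succ t ih =>
      intro ht h2
      have hval : (π ^ t) ⟨i, hin⟩ = ⟨i + t, by omega⟩ := ih (by omega) (by omega)
      rw [pow_succ', Equiv.Perm.mul_apply, hval]
      apply Fin.ext
      have := hmid ⟨i + t, by omega⟩ (by simp) (by simp; omega)
      simp at this ⊢
      omega
  have hq0 : (π ^ q) ⟨i, hin⟩ = ⟨i, hin⟩ := by
    have hval : (π ^ (q - 1)) ⟨i, hin⟩ = ⟨i + (q - 1), by omega⟩ :=
      hpow (q - 1) (by omega) (by omega)
    have hsp : q = (q - 1) + 1 := by omega
    rw [hsp, pow_succ', Equiv.Perm.mul_apply, hval]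
    apply Fin.ext
    have := hlast ⟨i + (q - 1), by omega⟩ (by simp; omega)
    simp at this ⊢
    omega
  have hper : Function.IsPeriodicPt (⇑π) q ⟨i, hin⟩ := by
    show (⇑π)^[q] _ = _
    rw [← Equiv.Perm.coe_pow]
    exact hq0
  have hPm : Pm π ⟨i, hin⟩ := by
    intro k
    have h1 : (π ^ (k % q)) ⟨i, hin⟩ = (π ^ k) ⟨i, hin⟩ := by
      have := hper.iterate_mod_apply k
      rwa [← Equiv.Perm.coe_pow, ← Equiv.Perm.coe_pow] at this
    rw [← h1, hpow (k % q) (Nat.mod_lt _ (by omega)) (by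
      have := Nat.mod_lt k (y := q) (by omega); omega)]
    simp [Fin.le_def]
  refine ⟨hPm, ?_, hpow⟩
  have hle : pp π ⟨i, hin⟩ ≤ q := hper.minimalPeriod_le (by omega)
  rcases Nat.lt_or_ge (pp π ⟨i, hin⟩) q with hlt | hge
  · exfalso
    have h1 := pow_pp π ⟨i, hin⟩
    rw [hpow _ hlt (by omega)] at h1
    have := pp_pos π (⟨i, hin⟩ : Fin n)
    have : i + pp π ⟨i, hin⟩ = i := Fin.mk.inj h1
    omega
  · omega

lemma isAdjCycle_of {q i : ℕ} (hq : 1 ≤ q) (hin : i < n) (hiq : i + q ≤ n)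
    (hpow : ∀ t, t < q → ((π ^ t) ⟨i, hin⟩ : ℕ) = i + t)
    (hq0 : (π ^ q) ⟨i, hin⟩ = ⟨i, hin⟩) : IsAdjCycle q π i := by
  refine ⟨hiq, ?_, ?_⟩
  · intro j hij hjq
    have ht : (j : ℕ) - i < q := by omega
    have hj : j = (π ^ ((j : ℕ) - i)) ⟨i, hin⟩ := by
      apply Fin.ext
      rw [hpow _ ht]
      omega
    conv_lhs => rw [hj]
    rw [← Equiv.Perm.mul_apply, ← pow_succ']
    rw [hpow _ (by omega)]
    omega
  · intro j hj
    have hje : j = (π ^ (q - 1)) ⟨i, hin⟩ := by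
      apply Fin.ext
      rw [hpow _ (by omega)]
      omega
    conv_lhs => rw [hje]
    rw [← Equiv.Perm.mul_apply, ← pow_succ', show q - 1 + 1 = q by omega, hq0]

variable {σ : Equiv.Perm (Fin n)}

lemma adj_occR (hw : List.ofFn ⇑σ = foataWord π) {q : ℕ} (hq : 1 ≤ q)
    (hc : IsAdjCycle q π 0) (hn : 0 < n) : OccR q σ (σ⁻¹ ⟨0, hn⟩) := by
  have hnq : q ≤ n := by have := hc.1; omega
  set x0 : Fin n := ⟨0, hn⟩ with hx0
  set j0 : Fin n := σ⁻¹ x0 with hj0def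
  have hsj : σ j0 = x0 := Equiv.apply_symm_apply σ x0
  obtain ⟨hPm, hppq, hpow⟩ := adjCycle_facts π hq hc hn
  have hPm' : Pm π (σ ⟨(j0 : ℕ), j0.2⟩) := by
    show Pm π (σ j0)
    rw [hsj]; exact hPm
  obtain ⟨A, B⟩ := sig5 hw j0.2 hPm'
  have hppe : pp π (σ ⟨(j0 : ℕ), j0.2⟩) = q := by
    show pp π (σ j0) = q
    rw [hsj]; exact hppq
  rw [hppe] at A B
  have hsj' : σ ⟨(j0 : ℕ), j0.2⟩ = x0 := hsj
  refine ⟨?_, ?_, ?_⟩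
  · rcases B with hB | ⟨h2, hm2⟩
    · exact hB
    · exfalso
      have := sig3 hw j0.2 h2 (by omega) hm2
      rw [hsj'] at this
      rw [Fin.lt_def] at this
      simp [hx0] at this
  · intro t ht l hl
    obtain ⟨h2, he⟩ := A t ht
    have hl' : l = ⟨(j0 : ℕ) + t, h2⟩ := Fin.ext hl
    rw [hl', he, hsj', hpow t ht (by omega)]
    simp
  · intro l hlj
    have := sig3 hw l.2 j0.2 hlj hPm'
    exact this

lemma adj_occS (hw : List.ofFn ⇑σ = foataWord π) {q i : ℕ} (hq : 1 ≤ q)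
    (hc : IsAdjCycle q π i) (hi0 : 0 < i) (hin : i < n) :
    OccS q σ (σ⁻¹ ⟨i, hin⟩) := by
  have hiq : i + q ≤ n := hc.1
  have hn : 0 < n := by omega
  set xi : Fin n := ⟨i, hin⟩ with hxi
  set j0 : Fin n := σ⁻¹ xi with hj0def
  have hsj : σ j0 = xi := Equiv.apply_symm_apply σ xi
  obtain ⟨hPm, hppq, hpow⟩ := adjCycle_facts π hq hc hin
  have hPm' : Pm π (σ ⟨(j0 : ℕ), j0.2⟩) := by
    show Pm π (σ j0); rw [hsj]; exact hPm
  obtain ⟨A, B⟩ := sig5 hw j0.2 hPm'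
  have hppe : pp π (σ ⟨(j0 : ℕ), j0.2⟩) = q := by
    show pp π (σ j0) = q
    rw [hsj]; exact hppq
  rw [hppe] at A B
  have hsj' : σ ⟨(j0 : ℕ), j0.2⟩ = xi := hsj
  -- values at positions j0 + t
  have hval : ∀ t, t < q → ∀ h2 : (j0 : ℕ) + t < n, ((σ ⟨(j0 : ℕ) + t, h2⟩ : Fin n) : ℕ) = i + t := by
    intro t ht h2
    obtain ⟨h2', he⟩ := A t ht
    have : σ ⟨(j0 : ℕ) + t, h2⟩ = σ ⟨(j0 : ℕ) + t, h2'⟩ := rfl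
    rw [this, he, hsj', hpow t ht (by omega)]
  -- values elsewhere are not in [i, i+q-1]
  have hout : ∀ l : Fin n, (l : ℕ) ≠ (j0 : ℕ) → ∀ t, t < q → ((σ l : Fin n) : ℕ) ≠ i + t → True := fun _ _ _ _ _ => trivial
  have hnotin : ∀ l : Fin n, (∀ t, t < q → (l : ℕ) ≠ (j0 : ℕ) + t) → ∀ t, t < q → ((σ l : Fin n) : ℕ) ≠ i + t := by
    intro l hl t ht hval'
    obtain ⟨h2, _⟩ := A t ht
    have : σ l = σ ⟨(j0 : ℕ) + t, h2⟩ := Fin.ext (by rw [hval t ht h2]; exact hval')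
    have hll : l = ⟨(j0 : ℕ) + t, h2⟩ := σ.injective this
    exact hl t ht (by rw [hll])
  -- position after the block
  have hq_lt : (j0 : ℕ) + q < n := by
    rcases B with hB | ⟨h2, _⟩
    · exfalso
      -- the value 0 has no position
      set z : Fin n := ⟨0, hn⟩ with hz
      set l : Fin n := σ⁻¹ z with hldef
      have hsl : σ l = z := Equiv.apply_symm_apply σ z
      rcases Nat.lt_trichotomy ((l : ℕ)) ((j0 : ℕ)) with hc1 | hc1 | hc1
      · have := sig3 hw l.2 j0.2 hc1 hPm'
        rw [hsj'] at this
        rw [Fin.lt_def] at this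
        have hlz : ((σ l : Fin n) : ℕ) = 0 := by rw [hsl]
        have h9 : (xi : ℕ) < ((σ l : Fin n) : ℕ) := this
        rw [hsl] at h9
        simp [hxi, hz] at h9
      · have : l = j0 := Fin.ext hc1
        rw [this, hsj] at hsl
        have : i = 0 := by
          have := congrArg Fin.val hsl
          simpa [hxi, hz] using this
        omega
      · have ht : (l : ℕ) - (j0 : ℕ) < q := by have := l.2; omega
        have h2 : (j0 : ℕ) + ((l : ℕ) - (j0 : ℕ)) < n := by omega
        have hvv := hval _ ht h2
        have hlz : ((σ l : Fin n) : ℕ) = 0 := by rw [hsl]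
        have hle2 : σ l = σ ⟨(j0 : ℕ) + ((l : ℕ) - (j0 : ℕ)), h2⟩ := by
          congr 1
          exact Fin.ext (show (l : ℕ) = (j0 : ℕ) + ((l : ℕ) - (j0 : ℕ)) by omega)
        rw [hle2, hvv] at hlz
        omega
    · omega
  have hminq : Pm π (σ ⟨(j0 : ℕ) + q, hq_lt⟩) := by
    rcases B with hB | ⟨h2, hm2⟩
    · omega
    · exact hm2
  refine ⟨hq_lt, ?_, ?_, ?_, ?_⟩
  · intro t ht l l' hl hl'
    have hb1 : (j0 : ℕ) + t < n := by omega
    have hb2 : (j0 : ℕ) + (t + 1) < n := by omega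
    have hv1 : ((σ ⟨(j0 : ℕ) + t, hb1⟩ : Fin n) : ℕ) = i + t := hval t (by omega) hb1
    have hv2 : ((σ ⟨(j0 : ℕ) + (t + 1), hb2⟩ : Fin n) : ℕ) = i + (t + 1) := hval (t+1) (by omega) hb2
    have hel : l = ⟨(j0 : ℕ) + t, hb1⟩ := Fin.ext hl
    have hel' : l' = ⟨(j0 : ℕ) + (t + 1), hb2⟩ :=
      Fin.ext (show (l' : ℕ) = (j0 : ℕ) + (t + 1) by omega)
    rw [hel, hel', Fin.lt_def, hv1, hv2]
    omega
  · intro l l' hl hl'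
    have hel : l = ⟨(j0 : ℕ) + q, hq_lt⟩ := Fin.ext hl
    have hel' : l' = ⟨(j0 : ℕ), j0.2⟩ := Fin.ext hl'
    rw [hel, hel']
    exact sig3 hw j0.2 hq_lt (by omega) hminq
  · intro l hlj m hm
    have hgt : i < ((σ l : Fin n) : ℕ) := by
      have h9 := sig3 hw l.2 j0.2 hlj hPm'
      rw [hsj', Fin.lt_def] at h9
      simpa [hxi] using h9
    have hne : ∀ t, t < q → ((σ l : Fin n) : ℕ) ≠ i + t :=
      hnotin l (fun t ht hc => by omega) -- l < j0 so l ≠ j0 + t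
    have hbig : i + q - 1 < ((σ l : Fin n) : ℕ) := by
      by_contra hle2
      push_neg at hle2
      have ht : ((σ l : Fin n) : ℕ) - i < q := by omega
      exact hne _ ht (by omega)
    have hbq : (j0 : ℕ) + (q - 1) < n := by omega
    have hvq : ((σ ⟨(j0 : ℕ) + (q - 1), hbq⟩ : Fin n) : ℕ) = i + (q - 1) :=
      hval (q-1) (by omega) hbq
    have hem : m = ⟨(j0 : ℕ) + (q - 1), hbq⟩ :=
      Fin.ext (show (m : ℕ) = (j0 : ℕ) + (q - 1) by omega)
    rw [hem, Fin.lt_def, hvq]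
    omega
  · intro l hlj m0 mq hm0 hmq
    rintro ⟨hlt1, hlt2⟩
    have hbq : (j0 : ℕ) + (q - 1) < n := by omega
    have hvq : ((σ ⟨(j0 : ℕ) + (q - 1), hbq⟩ : Fin n) : ℕ) = i + (q - 1) :=
      hval (q-1) (by omega) hbq
    have hem0 : m0 = ⟨(j0 : ℕ), j0.2⟩ := Fin.ext hm0
    have hemq : mq = ⟨(j0 : ℕ) + (q - 1), hbq⟩ :=
      Fin.ext (show (mq : ℕ) = (j0 : ℕ) + (q - 1) by omega)
    rw [hem0, hsj', Fin.lt_def] at hlt1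
    rw [hemq, Fin.lt_def, hvq] at hlt2
    have hxiv : (xi : ℕ) = i := by simp [hxi]
    rw [hxiv] at hlt1
    have ht : ((σ l : Fin n) : ℕ) - i < q := by omega
    have hne : ∀ t, t < q → ((σ l : Fin n) : ℕ) ≠ i + t :=
      hnotin l (fun t ht2 hc2 => by omega)
    exact hne _ ht (by omega)

lemma occR_adj (hw : List.ofFn ⇑σ = foataWord π) {q : ℕ} (hq : 1 ≤ q) {j : Fin n}
    (hr : OccR q σ j) : IsAdjCycle q π 0 := by
  obtain ⟨hjq, hvals, _⟩ := hr
  have hn : 0 < n := by omega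
  have hsj0 : ((σ j : Fin n) : ℕ) = 0 := hvals 0 (by omega) j (by omega)
  have hsx : σ ⟨(j : ℕ), j.2⟩ = ⟨0, hn⟩ := by
    show σ j = ⟨0, hn⟩
    exact Fin.ext hsj0
  have hPm' : Pm π (σ ⟨(j : ℕ), j.2⟩) := by
    rw [hsx]; exact Pm_zero hn
  obtain ⟨A, B⟩ := sig5 hw j.2 hPm'
  set p := pp π (σ ⟨(j : ℕ), j.2⟩) with hpdef
  have hppos : 0 < p := pp_pos π _
  -- p = q
  have hpq : p = q := by
    rcases Nat.lt_trichotomy p q with h | h | h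
    · exfalso
      rcases B with hB | ⟨h2, hm2⟩
      · omega
      · have := sig3 hw j.2 h2 (by omega) hm2
        rw [hsx, Fin.lt_def] at this
        simp at this
    · exact h
    · exfalso
      obtain ⟨h2, _⟩ := A q (by omega)
      omega
  have hvalt : ∀ t, t < q → ((π ^ t) (⟨0, hn⟩ : Fin n) : ℕ) = 0 + t := by
    intro t ht
    obtain ⟨h2, he⟩ := A t (by omega)
    rw [← hsx, ← he]
    have := hvals t ht ⟨(j : ℕ) + t, h2⟩ rfl
    omega
  have hq0 : (π ^ q) (⟨0, hn⟩ : Fin n) = ⟨0, hn⟩ := by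
    rw [← hsx, ← hpq, hpdef]
    exact pow_pp π _
  exact isAdjCycle_of π hq hn (by omega) hvalt hq0

lemma occS_adj (hw : List.ofFn ⇑σ = foataWord π) {q : ℕ} (hq : 1 ≤ q) {j : Fin n}
    (hs : OccS q σ j) : IsAdjCycle q π ((σ j : Fin n) : ℕ) ∧ 0 < ((σ j : Fin n) : ℕ) := by
  obtain ⟨h1, h2i, h3, h4, h5⟩ := hs
  set a := ((σ j : Fin n) : ℕ) with ha
  -- strict chain within the block
  have hchain : ∀ t (ht : t < q) s (hst : s < t),
      σ ⟨(j : ℕ) + s, by omega⟩ < σ ⟨(j : ℕ) + t, by omega⟩ := by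
    intro t
    induction t with
    | zero => intro _ s hs0; omega
    | succ t ih =>
      intro ht s hst
      have hstep : σ ⟨(j : ℕ) + t, by omega⟩ < σ ⟨(j : ℕ) + (t + 1), by omega⟩ := by
        refine h2i t (by omega) ⟨(j : ℕ) + t, by omega⟩ ⟨(j : ℕ) + (t + 1), by omega⟩ rfl ?_
        show (j : ℕ) + (t + 1) = (j : ℕ) + t + 1
        omega
      rcases Nat.lt_or_ge s t with h | h
      · exact lt_trans (ih (by omega) s h) hstep
      · have hst2 : s = t := by omega
        subst hst2
        exact hstep
  -- values are consecutive
  have hvals : ∀ t, t < q → ∀ hb : (j : ℕ) + t < n, ((σ ⟨(j : ℕ) + t, hb⟩ : Fin n) : ℕ) = a + t := by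
    intro t
    induction t with
    | zero =>
      intro _ hb
      have he : (⟨(j : ℕ) + 0, hb⟩ : Fin n) = j :=
        Fin.ext (show (j : ℕ) + 0 = (j : ℕ) by omega)
      rw [he]
      omega
    | succ t ih =>
      intro ht hb
      have hbt : (j : ℕ) + t < n := by omega
      have hvt : ((σ ⟨(j : ℕ) + t, hbt⟩ : Fin n) : ℕ) = a + t := ih (by omega) hbt
      have hgt : a + t < ((σ ⟨(j : ℕ) + (t + 1), hb⟩ : Fin n) : ℕ) := by
        have := hchain (t + 1) ht t (by omega)
        rw [Fin.lt_def] at this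
        have h9 : ((σ ⟨(j : ℕ) + t, hbt⟩ : Fin n) : ℕ) < ((σ ⟨(j : ℕ) + (t + 1), hb⟩ : Fin n) : ℕ) := this
        omega
      by_contra hne
      have hvgt : a + t + 1 < ((σ ⟨(j : ℕ) + (t + 1), hb⟩ : Fin n) : ℕ) := by omega
      have hbq : (j : ℕ) + (q - 1) < n := by omega
      -- value at the last block position bounds everything in the block
      have hbv : ((σ ⟨(j : ℕ) + (t + 1), hb⟩ : Fin n) : ℕ) ≤ ((σ ⟨(j : ℕ) + (q - 1), hbq⟩ : Fin n) : ℕ) := by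
        rcases Nat.lt_or_ge (t + 1) (q - 1) with h | h
        · have := hchain (q - 1) (by omega) (t + 1) h
          rw [Fin.lt_def] at this
          have h9 : ((σ ⟨(j : ℕ) + (t+1), by omega⟩ : Fin n) : ℕ) < ((σ ⟨(j : ℕ) + (q-1), by omega⟩ : Fin n) : ℕ) := this
          omega
        · have he : (⟨(j : ℕ) + (t + 1), hb⟩ : Fin n) = ⟨(j : ℕ) + (q - 1), hbq⟩ :=
            Fin.ext (show (j : ℕ) + (t + 1) = (j : ℕ) + (q - 1) by omega)
          rw [he]
      set y : Fin n := ⟨a + t + 1, by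
        have := (σ ⟨(j : ℕ) + (t + 1), hb⟩ : Fin n).2
        omega⟩ with hy
      set l : Fin n := σ⁻¹ y with hldef
      have hsl : σ l = y := Equiv.apply_symm_apply σ y
      have hslv : ((σ l : Fin n) : ℕ) = a + t + 1 := by rw [hsl]
      have hyb : a + t + 1 < ((σ ⟨(j : ℕ) + (q - 1), hbq⟩ : Fin n) : ℕ) := by omega
      rcases Nat.lt_trichotomy ((l : ℕ)) ((j : ℕ)) with hc1 | hc1 | hc1
      · have := h4 l hc1 ⟨(j : ℕ) + (q - 1), hbq⟩
          (show ((⟨(j : ℕ) + (q - 1), hbq⟩ : Fin n) : ℕ) = (j : ℕ) + q - 1 by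
            show (j : ℕ) + (q - 1) = (j : ℕ) + q - 1
            omega)
        rw [Fin.lt_def] at this
        omega
      · have hlj : l = j := Fin.ext hc1
        rw [hlj] at hslv
        omega
      · rcases Nat.lt_trichotomy ((l : ℕ)) ((j : ℕ) + q) with hc2 | hc2 | hc2
        · obtain ⟨s, hsdef⟩ : ∃ s, (l : ℕ) = (j : ℕ) + s := ⟨(l : ℕ) - (j : ℕ), by omega⟩
          have hs1 : 1 ≤ s := by omega
          have hsq : s < q := by omega
          have hbs : (j : ℕ) + s < n := by omega
          have hsl2 : σ (⟨(j : ℕ) + s, hbs⟩ : Fin n) = y := by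
            rw [show (⟨(j : ℕ) + s, hbs⟩ : Fin n) = l from
              Fin.ext (show (j : ℕ) + s = (l : ℕ) by omega)]
            exact hsl
          have hsl2v : ((σ ⟨(j : ℕ) + s, hbs⟩ : Fin n) : ℕ) = a + t + 1 := by rw [hsl2]
          rcases Nat.lt_trichotomy s (t + 1) with hc3 | hc3 | hc3
          · rcases Nat.lt_or_ge s t with h | h
            · have := hchain t (by omega) s h
              rw [Fin.lt_def] at this
              have h9 : ((σ ⟨(j : ℕ) + s, by omega⟩ : Fin n) : ℕ) < ((σ ⟨(j : ℕ) + t, by omega⟩ : Fin n) : ℕ) := this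
              omega
            · have hst : s = t := by omega
              subst hst
              omega
          · have he9 : σ (⟨(j : ℕ) + s, hbs⟩ : Fin n) = σ ⟨(j : ℕ) + (t + 1), hb⟩ := by
              congr 1
              exact Fin.ext (show (j : ℕ) + s = (j : ℕ) + (t + 1) by omega)
            have h9 : ((σ (⟨(j : ℕ) + s, hbs⟩ : Fin n) : Fin n) : ℕ) =
                ((σ (⟨(j : ℕ) + (t + 1), hb⟩ : Fin n) : Fin n) : ℕ) := by rw [he9]
            omega
          · have := hchain s (by omega) (t + 1) hc3
            rw [Fin.lt_def] at this
            have h9 : ((σ ⟨(j : ℕ) + (t+1), by omega⟩ : Fin n) : ℕ) < ((σ ⟨(j : ℕ) + s, by omega⟩ : Fin n) : ℕ) := this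
            omega
        · have hlq : l = ⟨(j : ℕ) + q, h1⟩ := Fin.ext hc2
          have := h3 ⟨(j : ℕ) + q, h1⟩ j (show ((⟨(j : ℕ) + q, h1⟩ : Fin n) : ℕ) = (j : ℕ) + q from rfl) rfl
          rw [Fin.lt_def] at this
          rw [← hlq] at this
          omega
        · have := h5 l hc2 j ⟨(j : ℕ) + (q - 1), hbq⟩ rfl
            (show ((⟨(j : ℕ) + (q - 1), hbq⟩ : Fin n) : ℕ) = (j : ℕ) + q - 1 by
              show (j : ℕ) + (q - 1) = (j : ℕ) + q - 1
              omega)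
          apply this
          constructor
          · rw [Fin.lt_def]
            omega
          · rw [Fin.lt_def]
            omega
  -- a > 0
  have hbq : (j : ℕ) + (q - 1) < n := by omega
  have hcq : ((σ ⟨(j : ℕ) + q, h1⟩ : Fin n) : ℕ) < a := by
    have := h3 ⟨(j : ℕ) + q, h1⟩ j rfl rfl
    rw [Fin.lt_def] at this
    exact this
  have ha0 : 0 < a := by omega
  have hbval : ((σ ⟨(j : ℕ) + (q - 1), hbq⟩ : Fin n) : ℕ) = a + (q - 1) := hvals (q - 1) (by omega) hbq
  -- j is a block start
  have hminj : Pm π (σ ⟨(j : ℕ), j.2⟩) := by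
    by_contra hnm
    obtain ⟨l, hlj, hl, hlt⟩ := sig4 hw j.2 hnm
    have h9 := h4 ⟨l, hl⟩ hlj ⟨(j : ℕ) + (q - 1), hbq⟩
      (show (j : ℕ) + (q - 1) = (j : ℕ) + q - 1 by omega)
    rw [Fin.lt_def] at h9 hlt
    have h8 : ((σ ⟨(j : ℕ), j.2⟩ : Fin n) : ℕ) = a := by
      show ((σ j : Fin n) : ℕ) = a
      omega
    omega
  -- j + q is a block start
  have hminq : Pm π (σ ⟨(j : ℕ) + q, h1⟩) := by
    by_contra hnm
    obtain ⟨l, hlj, hl, hlt⟩ := sig4 hw h1 hnm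
    rw [Fin.lt_def] at hlt
    rcases Nat.lt_trichotomy l ((j : ℕ)) with hc1 | hc1 | hc1
    · have h9 := h4 ⟨l, hl⟩ hc1 ⟨(j : ℕ) + (q - 1), hbq⟩
        (show (j : ℕ) + (q - 1) = (j : ℕ) + q - 1 by omega)
      rw [Fin.lt_def] at h9
      omega
    · have h8 : σ (⟨l, hl⟩ : Fin n) = σ j := by
        congr 1
        exact Fin.ext hc1
      have h8v : ((σ (⟨l, hl⟩ : Fin n) : Fin n) : ℕ) = a := by rw [h8]
      omega
    · have hsq : l - (j : ℕ) < q := by omega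
      have hbs : (j : ℕ) + (l - (j : ℕ)) < n := by omega
      have h8 : σ (⟨l, hl⟩ : Fin n) = σ ⟨(j : ℕ) + (l - (j : ℕ)), hbs⟩ := by
        congr 1
        exact Fin.ext (show l = (j : ℕ) + (l - (j : ℕ)) by omega)
      have h8v := hvals _ hsq hbs
      have h8v2 : ((σ (⟨l, hl⟩ : Fin n) : Fin n) : ℕ) = a + (l - (j : ℕ)) := by rw [h8, h8v]
      omega
  -- block length is q
  obtain ⟨A, B⟩ := sig5 hw j.2 hminj
  have hsje : σ ⟨(j : ℕ), j.2⟩ = σ j := rfl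
  set p := pp π (σ ⟨(j : ℕ), j.2⟩) with hpdef
  have hppos : 0 < p := pp_pos π _
  have hpq : p = q := by
    rcases Nat.lt_trichotomy p q with h | h | h
    · exfalso
      rcases B with hB | ⟨h2, hm2⟩
      · omega
      · have h9 := sig3 hw j.2 h2 (by omega) hm2
        rw [Fin.lt_def] at h9
        have h7 := hvals p h (by omega)
        -- σ ⟨j+p⟩ has value a + p, but is smaller than σ j (value a)
        have h6 : ((σ ⟨(j : ℕ) + p, h2⟩ : Fin n) : ℕ) = a + p := h7
        have h5v : ((σ ⟨(j : ℕ), j.2⟩ : Fin n) : ℕ) = a := by rw [hsje]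
        omega
    · exact h
    · exfalso
      obtain ⟨h2, he⟩ := A q (by omega)
      -- σ ⟨j+q⟩ = π^q (σ j) ≥ σ j by minimality, contradicting hcq
      have h9 : (σ ⟨(j : ℕ), j.2⟩ : Fin n) ≤ (π ^ q) (σ ⟨(j : ℕ), j.2⟩) := hminj q
      rw [← he] at h9
      rw [Fin.le_def] at h9
      have h5v : ((σ ⟨(j : ℕ), j.2⟩ : Fin n) : ℕ) = a := by rw [hsje]
      omega
  -- conclude
  have hain : a < n := (σ j : Fin n).2
  have hiq : a + q ≤ n := by omega
  have hsja : σ ⟨(j : ℕ), j.2⟩ = ⟨a, hain⟩ := Fin.ext rfl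
  have hpow : ∀ t, t < q → ((π ^ t) (⟨a, hain⟩ : Fin n) : ℕ) = a + t := by
    intro t ht
    obtain ⟨h2, he⟩ := A t (by omega)
    rw [← hsja, ← he]
    exact hvals t ht h2
  have hq0 : (π ^ q) (⟨a, hain⟩ : Fin n) = ⟨a, hain⟩ := by
    rw [← hsja, ← hpq, hpdef]
    exact pow_pp π _
  exact ⟨isAdjCycle_of π hq hain hiq hpow hq0, ha0⟩

end Foata

/-- Under Foata's fundamental transformation `π ↦ σ`, for `q ≥ 1` the number of
adjacent `q`-cycles of `π` equals the number of occurrences of the mesh pattern `r_q`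
in `σ` plus the number of occurrences of the mesh pattern `s_q` in `σ`. -/
theorem foata_adjacent_q_cycles {n : ℕ} (q : ℕ) (hq : 1 ≤ q)
    (π σ : Equiv.Perm (Fin n)) (h : σ = foataPerm π) :
    Nat.card {i : ℕ // IsAdjCycle q π i} =
      Nat.card {j : Fin n // OccR q σ j} + Nat.card {j : Fin n // OccS q σ j} := by
  classical
  have hw : List.ofFn ⇑σ = foataWord π := by rw [h]; exact Foata.ofFn_foataPerm π
  have key : {i : ℕ // IsAdjCycle q π i} ≃
      ({j : Fin n // OccR q σ j} ⊕ {j : Fin n // OccS q σ j}) := by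
    apply Equiv.ofBijective
      (f := fun x : {i : ℕ // IsAdjCycle q π i} =>
        if h0 : x.1 = 0 then
          Sum.inl ⟨σ⁻¹ ⟨0, by have := x.2.1; omega⟩,
            Foata.adj_occR π hw hq (h0 ▸ x.2) (by have := x.2.1; omega)⟩
        else
          Sum.inr ⟨σ⁻¹ ⟨x.1, by have := x.2.1; omega⟩,
            Foata.adj_occS π hw hq x.2 (Nat.pos_of_ne_zero h0) (by have := x.2.1; omega)⟩)
    constructor
    · rintro ⟨i, hi⟩ ⟨i', hi'⟩ hff
      dsimp only at hff
      by_cases h0 : i = 0 <;> by_cases h0' : i' = 0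
      · exact Subtype.ext (h0.trans h0'.symm)
      · rw [dif_pos h0, dif_neg h0'] at hff
        exact absurd hff (by simp)
      · rw [dif_neg h0, dif_pos h0'] at hff
        exact absurd hff (by simp)
      · rw [dif_neg h0, dif_neg h0'] at hff
        have h9 := Subtype.ext_iff.1 (Sum.inr.inj hff)
        have h8 := congrArg σ h9
        simp only [Equiv.Perm.coe_inv, Equiv.apply_symm_apply] at h8
        exact Subtype.ext (Fin.mk.inj h8)
    · rintro (⟨j, hr⟩ | ⟨j, hs⟩)
      · have hc0 : IsAdjCycle q π 0 := Foata.occR_adj π hw hq hr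
        refine ⟨⟨0, hc0⟩, ?_⟩
        dsimp only
        rw [dif_pos rfl]
        refine congrArg Sum.inl (Subtype.ext ?_)
        have hsj0 : ((σ j : Fin n) : ℕ) = 0 := hr.2.1 0 (by omega) j (by omega)
        rw [Equiv.Perm.inv_eq_iff_eq]
        exact Fin.ext hsj0.symm
      · obtain ⟨hcS, hpos⟩ := Foata.occS_adj π hw hq hs
        refine ⟨⟨((σ j : Fin n) : ℕ), hcS⟩, ?_⟩
        dsimp only
        rw [dif_neg (by omega : ¬((σ j : Fin n) : ℕ) = 0)]
        refine congrArg Sum.inr (Subtype.ext ?_)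
        rw [Equiv.Perm.inv_eq_iff_eq]
  rw [Nat.card_congr key, Nat.card_sum]
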